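/- arXiv:2512.12738 — 5 statements merged into one kernel-verified Lean document; each statement's English description precedes it below -/
import Mathlib

section
/- There exists ε > 0 such that for every A ∈ (1−ε, 1) and every φ ∈ [0, π/2], the polynomial P_{A,φ}(x,y) = x⁴ + 2A x²y² + y⁴ + 2(x cos φ + y sin φ)² − 2(x sin φ − y cos φ)² + 1/2 is non-discriminant, i.e. there is no point (x,y) ∈ ℝ² at which P_{A,φ} and both of its first partial derivatives vanish simultaneously. -/
noncomputable section

open Set

/-- The family of polynomials
`x⁴ + 2A x²y² + y⁴ + 2(x cos φ + y sin φ)² − 2(x sin φ − y cos φ)² + 1/2`. -/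
def P (A φ : ℝ) (v : ℝ × ℝ) : ℝ :=
  v.1 ^ 4 + 2 * A * v.1 ^ 2 * v.2 ^ 2 + v.2 ^ 4 +
    2 * (v.1 * Real.cos φ + v.2 * Real.sin φ) ^ 2 -
    2 * (v.1 * Real.sin φ - v.2 * Real.cos φ) ^ 2 + 1 / 2

lemma hasDerivAt_P1 (A c s y x : ℝ) :
    HasDerivAt (fun t : ℝ => t ^ 4 + 2 * A * t ^ 2 * y ^ 2 + y ^ 4 +
        2 * (t * c + y * s) ^ 2 - 2 * (t * s - y * c) ^ 2 + 1 / 2)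
      (4 * x ^ 3 + 4 * A * x * y ^ 2 + 4 * (x * c + y * s) * c - 4 * (x * s - y * c) * s) x := by
  have h1 : HasDerivAt (fun t : ℝ => t ^ 4) (4 * x ^ 3) x := by
    simpa using hasDerivAt_pow 4 x
  have h2 : HasDerivAt (fun t : ℝ => 2 * A * t ^ 2 * y ^ 2)
      (2 * A * (2 * x) * y ^ 2) x := by
    simpa using (((hasDerivAt_pow 2 x).const_mul (2 * A)).mul_const (y ^ 2))
  have hu : HasDerivAt (fun t : ℝ => t * c + y * s) c x := by
    simpa using ((hasDerivAt_id' (𝕜 := ℝ) x).mul_const c).add_const (y * s)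
  have hw : HasDerivAt (fun t : ℝ => t * s - y * c) s x := by
    simpa using ((hasDerivAt_id' (𝕜 := ℝ) x).mul_const s).sub_const (y * c)
  have hu2 : HasDerivAt (fun t : ℝ => 2 * (t * c + y * s) ^ 2)
      (2 * (2 * (x * c + y * s) * c)) x := by
    simpa using (hu.pow 2).const_mul 2
  have hw2 : HasDerivAt (fun t : ℝ => 2 * (t * s - y * c) ^ 2)
      (2 * (2 * (x * s - y * c) * s)) x := by
    simpa using (hw.pow 2).const_mul 2
  have H := ((((h1.add h2).add_const (y ^ 4)).add hu2).sub hw2).add_const (1 / 2 : ℝ)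
  exact H.congr_deriv (by ring)

lemma hasDerivAt_P2 (A c s x y : ℝ) :
    HasDerivAt (fun t : ℝ => x ^ 4 + 2 * A * x ^ 2 * t ^ 2 + t ^ 4 +
        2 * (x * c + t * s) ^ 2 - 2 * (x * s - t * c) ^ 2 + 1 / 2)
      (4 * A * x ^ 2 * y + 4 * y ^ 3 + 4 * (x * c + y * s) * s + 4 * (x * s - y * c) * c) y := by
  have h1 : HasDerivAt (fun t : ℝ => t ^ 4) (4 * y ^ 3) y := by
    simpa using hasDerivAt_pow 4 y
  have h2 : HasDerivAt (fun t : ℝ => 2 * A * x ^ 2 * t ^ 2)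
      (2 * A * x ^ 2 * (2 * y)) y := by
    simpa using ((hasDerivAt_pow 2 y).const_mul (2 * A * x ^ 2))
  have hu : HasDerivAt (fun t : ℝ => x * c + t * s) s y := by
    simpa using (HasDerivAt.const_add (x * c) ((hasDerivAt_id' (𝕜 := ℝ) y).mul_const s))
  have hw : HasDerivAt (fun t : ℝ => x * s - t * c) (-c) y := by
    simpa using (HasDerivAt.const_sub (x * s) ((hasDerivAt_id' (𝕜 := ℝ) y).mul_const c))
  have hu2 : HasDerivAt (fun t : ℝ => 2 * (x * c + t * s) ^ 2)
      (2 * (2 * (x * c + y * s) * s)) y := by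
    simpa using (hu.pow 2).const_mul 2
  have hw2 : HasDerivAt (fun t : ℝ => 2 * (x * s - t * c) ^ 2)
      (2 * (2 * (x * s - y * c) * (-c))) y := by
    simpa using (hw.pow 2).const_mul 2
  have H := (((HasDerivAt.const_add (x ^ 4) h2).add h1).add hu2).sub hw2 |>.add_const (1 / 2 : ℝ)
  exact H.congr_deriv (by ring)

lemma core_contradiction (A t D : ℝ) (hA1 : A < 1) (hA2 : 1 / 2 < A) (ht0 : 0 ≤ t)
    (hD0 : 0 ≤ D) (hD : D = 1 / 2 - 2 * A * t - 2 * t)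
    (hkey : (1 - A) ^ 2 * t * D = 1 / 4 + 2 * (1 - A) * t) : False := by
  have hBt : 0 ≤ (1 - A) * t := mul_nonneg (by linarith) ht0
  have hAt : 0 ≤ (2 * A - 1) * t := mul_nonneg (by linarith) ht0
  have ht6 : t ≤ 1 / 6 := by nlinarith
  have hD2 : D ≤ 1 / 2 := by nlinarith
  have htD : t * D ≤ 1 / 12 := by nlinarith [mul_nonneg ht0 hD0]
  have hB2 : (1 - A) ^ 2 ≤ 1 / 4 := by nlinarith
  have h3 : (1 - A) ^ 2 * (t * D) ≤ 1 / 4 * (1 / 12) :=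
    mul_le_mul hB2 htD (mul_nonneg ht0 hD0) (by norm_num)
  nlinarith [hkey, h3, hBt]

lemma alg_contradiction (x y A c s : ℝ) (hA1 : A < 1) (hA2 : 1 / 2 < A)
    (pyth : c ^ 2 + s ^ 2 = 1)
    (hPx : 4 * x ^ 3 + 4 * A * x * y ^ 2 + 4 * (x * c + y * s) * c
      - 4 * (x * s - y * c) * s = 0)
    (hPy : 4 * A * x ^ 2 * y + 4 * y ^ 3 + 4 * (x * c + y * s) * s
      + 4 * (x * s - y * c) * c = 0)
    (hP : x ^ 4 + 2 * A * x ^ 2 * y ^ 2 + y ^ 4 + 2 * (x * c + y * s) ^ 2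
      - 2 * (x * s - y * c) ^ 2 + 1 / 2 = 0) : False := by
  have hF : x ^ 4 + 2 * A * x ^ 2 * y ^ 2 + y ^ 4 = 1 / 2 := by
    linear_combination (x / 2) * hPx + (y / 2) * hPy - hP
  have hFw : (x * s - y * c) ^ 2 - (x * c + y * s) ^ 2 = 1 / 2 := by
    linear_combination (x / 4) * hPx + (y / 4) * hPy - hP
  have huw : (1 - A) * x * y * (x ^ 2 - y ^ 2) = 2 * (x * c + y * s) * (x * s - y * c) := by
    linear_combination (y / 4) * hPx - (x / 4) * hPy
  have hr : (x * c + y * s) ^ 2 + (x * s - y * c) ^ 2 = x ^ 2 + y ^ 2 := by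
    linear_combination (x ^ 2 + y ^ 2) * pyth
  have hsq : ((1 - A) * x * y * (x ^ 2 - y ^ 2)) ^ 2
      = (2 * (x * c + y * s) * (x * s - y * c)) ^ 2 := by rw [huw]
  have hkey : (1 - A) ^ 2 * (x * y) ^ 2 * (x ^ 2 - y ^ 2) ^ 2
      = 1 / 4 + 2 * (1 - A) * (x * y) ^ 2 := by
    linear_combination hsq + hF
      + ((x * c + y * s) ^ 2 + (x * s - y * c) ^ 2 + x ^ 2 + y ^ 2) * hr
      + ((x * c + y * s) ^ 2 - (x * s - y * c) ^ 2 - 1 / 2) * hFw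
  have hD : (x ^ 2 - y ^ 2) ^ 2 = 1 / 2 - 2 * A * (x * y) ^ 2 - 2 * (x * y) ^ 2 := by
    linear_combination hF
  exact core_contradiction A ((x * y) ^ 2) ((x ^ 2 - y ^ 2) ^ 2) hA1 hA2
    (sq_nonneg _) (sq_nonneg _) hD hkey

/-- For `A < 1` sufficiently close to `1` and every `φ ∈ [0, π/2]`, the polynomial
`P A φ` is non-discriminant: it has no real critical point with critical value `0`. -/
theorem P_nondiscriminant_for_A_close_to_one :
    ∃ ε > (0 : ℝ), ∀ A : ℝ, A ∈ Ioo (1 - ε) 1 → ∀ φ : ℝ, φ ∈ Icc 0 (Real.pi / 2) →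
      ¬ ∃ v : ℝ × ℝ, P A φ v = 0 ∧ fderiv ℝ (P A φ) v = 0 := by
  refine ⟨1 / 2, by norm_num, ?_⟩
  intro A hA φ _ h
  obtain ⟨⟨x, y⟩, hP0, hf⟩ := h
  have hA1 : A < 1 := hA.2
  have hA2 : (1 : ℝ) / 2 < A := by have := hA.1; linarith
  set c := Real.cos φ with hc
  set s := Real.sin φ with hs
  have pyth : c ^ 2 + s ^ 2 = 1 := by
    rw [hc, hs]; exact Real.cos_sq_add_sin_sq φ
  have hdiff : DifferentiableAt ℝ (P A φ) (x, y) := by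
    unfold P; fun_prop
  clear_value c s
  have hx0 : fderiv ℝ (P A φ) (x, y) (1, 0) = 0 := by rw [hf]; simp
  have hy0 : fderiv ℝ (P A φ) (x, y) (0, 1) = 0 := by rw [hf]; simp
  have hι1 : HasDerivAt (fun t : ℝ => ((t, y) : ℝ × ℝ)) ((1 : ℝ), (0 : ℝ)) x :=
    (hasDerivAt_id' x).prodMk (hasDerivAt_const x y)
  have hι2 : HasDerivAt (fun t : ℝ => ((x, t) : ℝ × ℝ)) ((0 : ℝ), (1 : ℝ)) y :=
    (hasDerivAt_const y x).prodMk (hasDerivAt_id' y)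
  have hDx : HasDerivAt (fun t : ℝ => P A φ (t, y)) (fderiv ℝ (P A φ) (x, y) (1, 0)) x :=
    by have := hdiff.hasFDerivAt.comp_hasDerivAt x hι1; exact this
  have hDy : HasDerivAt (fun t : ℝ => P A φ (x, t)) (fderiv ℝ (P A φ) (x, y) (0, 1)) y :=
    hdiff.hasFDerivAt.comp_hasDerivAt y hι2
  have hEx : HasDerivAt (fun t : ℝ => P A φ (t, y))
      (4 * x ^ 3 + 4 * A * x * y ^ 2 + 4 * (x * c + y * s) * c - 4 * (x * s - y * c) * s) x := by
    have := hasDerivAt_P1 A c s y x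
    simpa [P, ← hc, ← hs] using this
  have hEy : HasDerivAt (fun t : ℝ => P A φ (x, t))
      (4 * A * x ^ 2 * y + 4 * y ^ 3 + 4 * (x * c + y * s) * s + 4 * (x * s - y * c) * c) y := by
    have := hasDerivAt_P2 A c s x y
    simpa [P, ← hc, ← hs] using this
  have hPx : 4 * x ^ 3 + 4 * A * x * y ^ 2 + 4 * (x * c + y * s) * c
      - 4 * (x * s - y * c) * s = 0 := by
    rw [← hDx.unique hEx, hx0]
  have hPy : 4 * A * x ^ 2 * y + 4 * y ^ 3 + 4 * (x * c + y * s) * s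
      + 4 * (x * s - y * c) * c = 0 := by
    rw [← hDy.unique hEy, hy0]
  have hP : x ^ 4 + 2 * A * x ^ 2 * y ^ 2 + y ^ 4 + 2 * (x * c + y * s) ^ 2
      - 2 * (x * s - y * c) ^ 2 + 1 / 2 = 0 := by
    simpa [P, ← hc, ← hs] using hP0
  exact alg_contradiction x y A c s hA1 hA2 pyth hPx hPy hP
end
end

section
/- Let l(x,y,z) = αx + βy + γz be a linear function on ℝ³ of unit norm (α² + β² + γ² = 1) vanishing on the vector (1,1,1) (i.e. α + β + γ = 0). Then the polynomial F(x,y,z) = x³ + y³ + z³ − l(x,y,z)² has exactly one real critical point, namely the origin: the gradient of F vanishes at a point (x,y,z) ∈ ℝ³ if and only if (x,y,z) = (0,0,0). -/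
set_option maxHeartbeats 1000000

noncomputable section

def pi1 : ℝ × ℝ × ℝ →L[ℝ] ℝ := ContinuousLinearMap.fst ℝ ℝ (ℝ × ℝ)
def pi2 : ℝ × ℝ × ℝ →L[ℝ] ℝ :=
  (ContinuousLinearMap.fst ℝ ℝ ℝ).comp (ContinuousLinearMap.snd ℝ ℝ (ℝ × ℝ))
def pi3 : ℝ × ℝ × ℝ →L[ℝ] ℝ :=
  (ContinuousLinearMap.snd ℝ ℝ ℝ).comp (ContinuousLinearMap.snd ℝ ℝ (ℝ × ℝ))

lemma hasFDerivAt_F (α β γ : ℝ) (a : ℝ × ℝ × ℝ) :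
    HasFDerivAt (fun v : ℝ × ℝ × ℝ =>
        v.1 ^ 3 + v.2.1 ^ 3 + v.2.2 ^ 3 -
          (α * v.1 + β * v.2.1 + γ * v.2.2) ^ 2)
      (((3 * a.1 ^ 2) • pi1 + (3 * a.2.1 ^ 2) • pi2 + (3 * a.2.2 ^ 2) • pi3)
        - (2 * (α * a.1 + β * a.2.1 + γ * a.2.2)) • (α • pi1 + β • pi2 + γ • pi3)) a := by
  have h1 : HasFDerivAt (fun v : ℝ × ℝ × ℝ => v.1) pi1 a := hasFDerivAt_fst
  have h2 : HasFDerivAt (fun v : ℝ × ℝ × ℝ => v.2.1) pi2 a :=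
    (hasFDerivAt_fst).comp a hasFDerivAt_snd
  have h3 : HasFDerivAt (fun v : ℝ × ℝ × ℝ => v.2.2) pi3 a :=
    (hasFDerivAt_snd).comp a hasFDerivAt_snd
  have hl : HasFDerivAt (fun v : ℝ × ℝ × ℝ => α * v.1 + β * v.2.1 + γ * v.2.2)
      (α • pi1 + β • pi2 + γ • pi3) a :=
    ((h1.const_mul α).add (h2.const_mul β)).add (h3.const_mul γ)
  have hp1 := (hasDerivAt_pow 3 a.1).comp_hasFDerivAt a h1
  have hp2 := (hasDerivAt_pow 3 a.2.1).comp_hasFDerivAt a h2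
  have hp3 := (hasDerivAt_pow 3 a.2.2).comp_hasFDerivAt a h3
  have hl2 := (hasDerivAt_pow 2 (α * a.1 + β * a.2.1 + γ * a.2.2)).comp_hasFDerivAt a hl
  have := ((hp1.add hp2).add hp3).sub hl2
  convert this using 2 <;> norm_num
  all_goals rfl

/-- Let `l = αx + βy + γz` be a linear function of unit norm vanishing on the vector
`(1,1,1)`. Then the only real critical point of `F = x³ + y³ + z³ - l²` is the origin. -/
theorem cubic_minus_linear_sq_unique_critical_point
    (α β γ : ℝ) (hnorm : α ^ 2 + β ^ 2 + γ ^ 2 = 1) (hsum : α + β + γ = 0) :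
    ∀ a : ℝ × ℝ × ℝ,
      fderiv ℝ (fun v : ℝ × ℝ × ℝ =>
        v.1 ^ 3 + v.2.1 ^ 3 + v.2.2 ^ 3 -
          (α * v.1 + β * v.2.1 + γ * v.2.2) ^ 2) a = 0 ↔ a = 0 := by
  intro a
  have hF := hasFDerivAt_F α β γ a
  rw [hF.fderiv]
  constructor
  · intro h
    set l := α * a.1 + β * a.2.1 + γ * a.2.2 with hldef
    have e1 := congrArg (fun L : ℝ × ℝ × ℝ →L[ℝ] ℝ => L (1, 0, 0)) h
    have e2 := congrArg (fun L : ℝ × ℝ × ℝ →L[ℝ] ℝ => L (0, 1, 0)) h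
    have e3 := congrArg (fun L : ℝ × ℝ × ℝ →L[ℝ] ℝ => L (0, 0, 1)) h
    simp only [ContinuousLinearMap.sub_apply, ContinuousLinearMap.add_apply,
      ContinuousLinearMap.smul_apply, pi1, pi2, pi3, ContinuousLinearMap.coe_comp',
      Function.comp_apply, ContinuousLinearMap.coe_fst', ContinuousLinearMap.coe_snd',
      ContinuousLinearMap.zero_apply, smul_eq_mul, mul_one, mul_zero, add_zero,
      zero_add] at e1 e2 e3
    clear h hF
    have h0 : 2 * l * α + 2 * l * β + 2 * l * γ = 0 := by
      have : 2 * l * α + 2 * l * β + 2 * l * γ = 2 * l * (α + β + γ) := by ring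
      rw [this, hsum]; ring
    have hsq : a.1 ^ 2 + a.2.1 ^ 2 + a.2.2 ^ 2 = 0 := by linarith
    have h1 : a.1 = 0 := by
      have : a.1 ^ 2 = 0 := by nlinarith [sq_nonneg a.2.1, sq_nonneg a.2.2]
      exact pow_eq_zero_iff two_ne_zero |>.mp this
    have h2 : a.2.1 = 0 := by
      have : a.2.1 ^ 2 = 0 := by nlinarith [sq_nonneg a.1, sq_nonneg a.2.2]
      exact pow_eq_zero_iff two_ne_zero |>.mp this
    have h3 : a.2.2 = 0 := by
      have : a.2.2 ^ 2 = 0 := by nlinarith [sq_nonneg a.1, sq_nonneg a.2.1]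
      exact pow_eq_zero_iff two_ne_zero |>.mp this
    exact Prod.ext h1 (Prod.ext h2 h3)
  · rintro rfl
    norm_num
end
end

section
/- Let l(x,y,z) = αx + βy + γz be a linear function on ℝ³ of unit norm (α² + β² + γ² = 1) vanishing on the vector (1,1,1) (i.e. α + β + γ = 0), and set F(x,y,z) = x³ + y³ + z³ − 6xyz + 3·l(x,y,z)². Then the origin is a critical point of F with critical value 0, and every real critical point a ∈ ℝ³ of F with a ≠ (0,0,0) satisfies F(a) > 0. -/
noncomputable section

/-- `F = x³ + y³ + z³ - 6xyz + 3l²`, where `l = αx + βy + γz`. -/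
def F (α β γ : ℝ) (v : ℝ × ℝ × ℝ) : ℝ :=
  v.1 ^ 3 + v.2.1 ^ 3 + v.2.2 ^ 3 - 6 * v.1 * v.2.1 * v.2.2 +
    3 * (α * v.1 + β * v.2.1 + γ * v.2.2) ^ 2

open ContinuousLinearMap in
/-- The full derivative of `F` at any point. -/
lemma hF_aux (α β γ : ℝ) (a : ℝ × ℝ × ℝ) :
    HasFDerivAt (F α β γ)
      ((3 * a.1 ^ 2 - 6 * a.2.1 * a.2.2 + 6 * (α * a.1 + β * a.2.1 + γ * a.2.2) * α) •
          (fst ℝ ℝ (ℝ × ℝ)) +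
        (3 * a.2.1 ^ 2 - 6 * a.1 * a.2.2 + 6 * (α * a.1 + β * a.2.1 + γ * a.2.2) * β) •
          ((fst ℝ ℝ ℝ).comp (snd ℝ ℝ (ℝ × ℝ))) +
        (3 * a.2.2 ^ 2 - 6 * a.1 * a.2.1 + 6 * (α * a.1 + β * a.2.1 + γ * a.2.2) * γ) •
          ((snd ℝ ℝ ℝ).comp (snd ℝ ℝ (ℝ × ℝ)))) a := by
  have hx : HasFDerivAt (fun v : ℝ × ℝ × ℝ => v.1) (fst ℝ ℝ (ℝ × ℝ)) a := hasFDerivAt_fst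
  have hy : HasFDerivAt (fun v : ℝ × ℝ × ℝ => v.2.1) ((fst ℝ ℝ ℝ).comp (snd ℝ ℝ (ℝ × ℝ))) a :=
    hasFDerivAt_fst.comp a hasFDerivAt_snd
  have hz : HasFDerivAt (fun v : ℝ × ℝ × ℝ => v.2.2) ((snd ℝ ℝ ℝ).comp (snd ℝ ℝ (ℝ × ℝ))) a :=
    hasFDerivAt_snd.comp a hasFDerivAt_snd
  have h := (((((hx.mul hx).mul hx).add ((hy.mul hy).mul hy)).add ((hz.mul hz).mul hz)).sub
      (((hx.const_mul 6).mul hy).mul hz)).add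
      ((((hx.const_mul α).add (hy.const_mul β)).add (hz.const_mul γ)).mul
        (((hx.const_mul α).add (hy.const_mul β)).add (hz.const_mul γ)) |>.const_mul 3)
  have heq : (F α β γ) = fun v : ℝ × ℝ × ℝ =>
      v.1 * v.1 * v.1 + v.2.1 * v.2.1 * v.2.1 + v.2.2 * v.2.2 * v.2.2 -
        6 * v.1 * v.2.1 * v.2.2 +
        3 * ((α * v.1 + β * v.2.1 + γ * v.2.2) * (α * v.1 + β * v.2.1 + γ * v.2.2)) := by
    funext v; simp only [F]; ring
  rw [heq]
  refine HasFDerivAt.congr_of_eventuallyEq (h.congr_fderiv ?_) (Filter.Eventually.of_forall fun v => ?_)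
  · ext v <;> simp <;> ring
  · simp

/-- Let `l = αx + βy + γz` be a linear function of unit norm vanishing on the vector
`(1,1,1)`, and `F = x³ + y³ + z³ - 6xyz + 3l²`. Then the origin is a critical point of `F`
with critical value `0`, and every other real critical point of `F` has positive
critical value. -/
theorem critical_values_positive_away_from_origin
    (α β γ : ℝ) (hnorm : α ^ 2 + β ^ 2 + γ ^ 2 = 1) (hsum : α + β + γ = 0) :
    fderiv ℝ (F α β γ) 0 = 0 ∧ F α β γ 0 = 0 ∧
      ∀ a : ℝ × ℝ × ℝ, a ≠ 0 → fderiv ℝ (F α β γ) a = 0 → 0 < F α β γ a := by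
  refine ⟨?_, ?_, ?_⟩
  · rw [(hF_aux α β γ 0).fderiv]
    ext v <;> simp
  · simp [F]
  · intro a ha hcrit
    rw [(hF_aux α β γ a).fderiv] at hcrit
    obtain ⟨x, y, z⟩ := a
    set l := α * x + β * y + γ * z with hl
    have e1 : (3 * x ^ 2 - 6 * y * z + 6 * l * α) = 0 := by
      have := ContinuousLinearMap.ext_iff.mp hcrit (1, 0, 0)
      simpa using this
    have e2 : (3 * y ^ 2 - 6 * x * z + 6 * l * β) = 0 := by
      have := ContinuousLinearMap.ext_iff.mp hcrit (0, 1, 0)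
      simpa using this
    have e3 : (3 * z ^ 2 - 6 * x * y + 6 * l * γ) = 0 := by
      have := ContinuousLinearMap.ext_iff.mp hcrit (0, 0, 1)
      simpa using this
    -- Euler relation: the value of `F` at a critical point is `l ^ 2`.
    have hFval : F α β γ (x, y, z) = l ^ 2 := by
      simp only [F]
      linear_combination (x / 3) * e1 + (y / 3) * e2 + (z / 3) * e3
    rw [hFval]
    -- If `l = 0` at a critical point, the point must be the origin.
    have hlne : l ≠ 0 := by
      intro hl0
      rw [hl0] at e1 e2 e3
      have h1 : x ^ 2 = 2 * y * z := by linarith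
      have h2 : y ^ 2 = 2 * x * z := by linarith
      have h3 : z ^ 2 = 2 * x * y := by linarith
      have hx0 : x = 0 := by
        have : (7 : ℝ) * x ^ 4 = 0 := by
          linear_combination (7 * x ^ 2 - 2 * y * z) * h1 - 4 * z ^ 2 * h2 - 8 * z * x * h3
        have hx4 : x ^ 4 = 0 := by linarith
        exact pow_eq_zero_iff (by norm_num) |>.mp hx4
      have hy0 : y = 0 := by
        have : (7 : ℝ) * y ^ 4 = 0 := by
          linear_combination (7 * y ^ 2 - 2 * x * z) * h2 - 4 * z ^ 2 * h1 - 8 * z * y * h3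
        have : y ^ 4 = 0 := by linarith
        exact pow_eq_zero_iff (by norm_num) |>.mp this
      have hz0 : z = 0 := by
        have : (7 : ℝ) * z ^ 4 = 0 := by
          linear_combination (7 * z ^ 2 - 2 * x * y) * h3 - 4 * y ^ 2 * h1 - 8 * y * z * h2
        have : z ^ 4 = 0 := by linarith
        exact pow_eq_zero_iff (by norm_num) |>.mp this
      exact ha (by simp [hx0, hy0, hz0, Prod.ext_iff])
    positivity
end
end

section
/- The equation (A² + 3)³ = 135 (A² − 1)², equivalently (A² + 3)³ / (27 (A² − 1)²) = 5, has exactly two real solutions A in the interval (−∞, −1). -/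
open Set

private noncomputable def fj (A : ℝ) : ℝ := (A ^ 2 + 3) ^ 3 - 135 * (A ^ 2 - 1) ^ 2

private lemma fj_cont : Continuous fj := by unfold fj; continuity

private lemma fj_deriv (A : ℝ) :
    HasDerivAt fj (6 * A * ((A ^ 2) ^ 2 - 84 * A ^ 2 + 99)) A := by
  have h1 : HasDerivAt (fun A : ℝ => A ^ 2) (2 * A) A := by
    simpa using hasDerivAt_pow 2 A
  have h2 := (h1.add_const 3).pow 3
  have h3 := ((h1.sub_const 1).pow 2).const_mul (135 : ℝ)
  have h4 := h2.sub h3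
  refine (h4.congr_of_eventuallyEq (Filter.Eventually.of_forall fun x => ?_)).congr_deriv ?_
  · simp [fj]
  · ring

private lemma fj_anti : StrictAntiOn fj (Iic (-10 : ℝ)) := by
  apply strictAntiOn_of_deriv_neg (convex_Iic _) fj_cont.continuousOn
  intro x hx
  rw [interior_Iic] at hx
  have hx' : x < -10 := hx
  rw [(fj_deriv x).deriv]
  have h2 : x ^ 2 > 100 := by nlinarith
  have h3 : (x ^ 2) ^ 2 - 84 * x ^ 2 + 99 > 0 := by nlinarith [sq_nonneg (x ^ 2 - 100)]
  exact mul_neg_of_neg_of_pos (by linarith) h3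

private lemma fj_mono : StrictMonoOn fj (Icc (-9 : ℝ) (-6/5)) := by
  apply strictMonoOn_of_deriv_pos (convex_Icc _ _) fj_cont.continuousOn
  intro x hx
  rw [interior_Icc] at hx
  obtain ⟨h1, h2⟩ := hx
  rw [(fj_deriv x).deriv]
  have hA : x ^ 2 < 81 := by nlinarith
  have hB : x ^ 2 > 36/25 := by nlinarith
  have hq : (x ^ 2) ^ 2 - 84 * x ^ 2 + 99 < 0 := by
    nlinarith [mul_pos (by linarith : x ^ 2 - 36/25 > 0) (by linarith : 81 - x ^ 2 > 0)]
  exact mul_pos_of_neg_of_neg (by linarith) hq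

private lemma fj_neg : ∀ x ∈ Icc (-10 : ℝ) (-9), fj x < 0 := by
  rintro x ⟨h1, h2⟩
  have hA : x ^ 2 ≥ 81 := by nlinarith
  have hB : x ^ 2 ≤ 100 := by nlinarith
  unfold fj
  nlinarith [mul_nonneg (mul_nonneg (by linarith : (0:ℝ) ≤ x ^ 2 - 81)
    (by linarith : (0:ℝ) ≤ 100 - x ^ 2)) (by linarith : (0:ℝ) ≤ x ^ 2 + 55)]

private lemma fj_pos : ∀ x : ℝ, -6/5 < x → x < -1 → 0 < fj x := by
  intro x h1 h2
  have hA : x ^ 2 > 1 := by nlinarith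
  have hB : x ^ 2 < 36/25 := by nlinarith
  unfold fj
  nlinarith [mul_nonneg (mul_nonneg (by linarith : (0:ℝ) ≤ x ^ 2 - 1)
    (by linarith : (0:ℝ) ≤ 36/25 - x ^ 2)) (by linarith : (0:ℝ) ≤ 3089/25 - x ^ 2)]

/-- The equation `(A² + 3)³ = 135 (A² − 1)²` (i.e. `(A² + 3)³ / (27 (A² − 1)²) = 5`,
saying that the `j`-invariant of the quartic form `x⁴ + 2A x²y² + y⁴` equals `5`)
has exactly two real solutions `A < -1`. -/
theorem j_invariant_equation_has_two_roots_below_neg_one :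
    {A : ℝ | A < -1 ∧ (A ^ 2 + 3) ^ 3 = 135 * (A ^ 2 - 1) ^ 2}.ncard = 2 := by
  have hv12 : fj (-12) = 415908 := by norm_num [fj]
  have hv10 : fj (-10) = -230408 := by norm_num [fj]
  have hv9 : fj (-9) = -271296 := by norm_num [fj]
  have hv65 : fj (-6/5) = 959256 / 15625 := by norm_num [fj]
  -- root x₁ in [-12, -10]
  obtain ⟨x₁, hx₁m, hx₁⟩ : ∃ x ∈ Icc (-12 : ℝ) (-10), fj x = 0 := by
    have h := intermediate_value_Icc' (by norm_num : (-12 : ℝ) ≤ -10)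
      fj_cont.continuousOn (a := -12) (b := -10)
    have h0 : (0 : ℝ) ∈ Icc (fj (-10)) (fj (-12)) := by rw [hv10, hv12]; norm_num
    obtain ⟨x, hx, hfx⟩ := h h0
    exact ⟨x, hx, hfx⟩
  -- root x₂ in [-9, -6/5]
  obtain ⟨x₂, hx₂m, hx₂⟩ : ∃ x ∈ Icc (-9 : ℝ) (-6/5), fj x = 0 := by
    have h := intermediate_value_Icc (by norm_num : (-9 : ℝ) ≤ -6/5)
      fj_cont.continuousOn (a := -9) (b := -6/5)
    have h0 : (0 : ℝ) ∈ Icc (fj (-9)) (fj (-6/5)) := by rw [hv9, hv65]; norm_num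
    obtain ⟨x, hx, hfx⟩ := h h0
    exact ⟨x, hx, hfx⟩
  obtain ⟨hx₁l, hx₁r⟩ := hx₁m
  obtain ⟨hx₂l, hx₂r⟩ := hx₂m
  have hne : x₁ ≠ x₂ := by intro h; rw [h] at hx₁r; linarith
  have hset : {A : ℝ | A < -1 ∧ (A ^ 2 + 3) ^ 3 = 135 * (A ^ 2 - 1) ^ 2} = {x₁, x₂} := by
    ext A
    simp only [mem_setOf_eq, mem_insert_iff, mem_singleton_iff]
    constructor
    · rintro ⟨hA1, hA2⟩
      have hfA : fj A = 0 := by unfold fj; linarith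
      rcases le_or_gt A (-10) with h10 | h10
      · left
        exact fj_anti.injOn (mem_Iic.2 h10) (mem_Iic.2 hx₁r) (by rw [hfA, hx₁])
      rcases le_or_gt A (-9) with h9 | h9
      · exact absurd hfA (by have := fj_neg A ⟨le_of_lt h10, h9⟩; linarith)
      rcases le_or_gt A (-6/5) with h65 | h65
      · right
        exact fj_mono.injOn ⟨le_of_lt h9, h65⟩ ⟨hx₂l, hx₂r⟩ (by rw [hfA, hx₂])
      · exact absurd hfA (by have := fj_pos A h65 hA1; linarith)
    · rintro (rfl | rfl)
      · refine ⟨by linarith, ?_⟩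
        have : fj A = 0 := hx₁
        unfold fj at this; linarith
      · refine ⟨by linarith, ?_⟩
        have : fj A = 0 := hx₂
        unfold fj at this; linarith
  rw [hset]
  exact Set.ncard_pair hne
end

section
/- For every α ∈ (1/4, 1/2), the real plane curve {(x,y) ∈ ℝ² : x⁴ + y⁴ − x² − y² + α = 0} has exactly four connected components; and for every α ∈ (0, 1/4), the curve {(x,y) ∈ ℝ² : x⁴ + y⁴ − x² − y² + α = 0} has exactly two connected components. -/
open Set

private lemma card_components_eq {X : Type*} [TopologicalSpace X] {n : ℕ}
    (U : Fin n → Set X) (ho : ∀ i, IsOpen (U i))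
    (hc : ∀ i, IsPreconnected (U i)) (hp : ∀ i, (U i).Nonempty)
    (hd : ∀ i j, i ≠ j → Disjoint (U i) (U j))
    (hcov : ∀ x : X, ∃ i, x ∈ U i) :
    Nat.card (ConnectedComponents X) = n := by
  choose p hpU using hp
  have hclopen : ∀ i, IsClopen (U i) := by
    intro i
    refine ⟨?_, ho i⟩
    have hcompl : (U i)ᶜ = ⋃ j ∈ {j | j ≠ i}, U j := by
      ext x
      simp only [mem_compl_iff, mem_iUnion, mem_setOf_eq]
      constructor
      · intro hx
        obtain ⟨j, hj⟩ := hcov x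
        refine ⟨j, fun h => hx (h ▸ hj), hj⟩
      · rintro ⟨j, hji, hj⟩ hxi
        exact (hd j i hji).le_bot ⟨hj, hxi⟩
    rw [← isOpen_compl_iff, hcompl]
    exact isOpen_biUnion fun j _ => ho j
  have hbij : Function.Bijective (fun i => (ConnectedComponents.mk (p i))) := by
    constructor
    · intro i j hij
      rw [ConnectedComponents.coe_eq_coe] at hij
      have h1 : connectedComponent (p i) ⊆ U i :=
        (hclopen i).connectedComponent_subset (hpU i)
      have h2 : p j ∈ U i := h1 (hij ▸ mem_connectedComponent)
      by_contra hne
      exact (hd i j hne).le_bot ⟨h2, hpU j⟩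
    · intro c
      obtain ⟨x, rfl⟩ := ConnectedComponents.surjective_coe c
      obtain ⟨i, hi⟩ := hcov x
      refine ⟨i, ?_⟩
      rw [ConnectedComponents.coe_eq_coe]
      exact connectedComponent_eq (((hc i).subset_connectedComponent (hpU i)) hi)
  have := Nat.card_eq_of_bijective _ hbij
  simpa using this.symm

private lemma exists_cos_sin {a b r : ℝ} (hr : 0 < r) (h : a ^ 2 + b ^ 2 = r ^ 2) :
    ∃ θ : ℝ, a = r * Real.cos θ ∧ b = r * Real.sin θ := by
  set z : ℂ := ⟨a, b⟩ with hz
  have habs : ‖z‖ = r := by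
    rw [Complex.norm_def, Complex.normSq_mk]
    rw [show a * a + b * b = r ^ 2 by nlinarith]
    exact Real.sqrt_sq hr.le
  have hz0 : z ≠ 0 := by
    intro h0
    rw [h0] at habs
    simp at habs
    linarith
  refine ⟨Complex.arg z, ?_, ?_⟩
  · have := Complex.cos_arg hz0
    rw [habs] at this
    rw [this]
    field_simp
    rfl
  · have := Complex.sin_arg z
    rw [habs] at this
    rw [this]
    field_simp
    rfl

private def qsg : Fin 4 → ℝ × ℝ := ![(1,1), (1,-1), (-1,1), (-1,-1)]

private lemma qsg_cases :
    ∀ i, ((qsg i).1 = 1 ∨ (qsg i).1 = -1) ∧ ((qsg i).2 = 1 ∨ (qsg i).2 = -1) := by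
  intro i; fin_cases i <;> norm_num [qsg]

private lemma qsg_inj : Function.Injective qsg := by
  intro i j hij
  fin_cases i <;> fin_cases j <;>
    first
      | rfl
      | (exfalso; rw [Prod.ext_iff] at hij; norm_num [qsg] at hij)

private lemma part1 (α : ℝ) (hα : α ∈ Ioo (1/4 : ℝ) (1/2 : ℝ)) :
    Nat.card (ConnectedComponents
      ↥{v : ℝ × ℝ | v.1 ^ 4 + v.2 ^ 4 - v.1 ^ 2 - v.2 ^ 2 + α = 0}) = 4 := by
  obtain ⟨hα1, hα2⟩ := hα
  set S : Set (ℝ × ℝ) := {v : ℝ × ℝ | v.1 ^ 4 + v.2 ^ 4 - v.1 ^ 2 - v.2 ^ 2 + α = 0} with hSdef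
  set r : ℝ := Real.sqrt (1/2 - α) with hrdef
  have hr2 : r ^ 2 = 1/2 - α := Real.sq_sqrt (by linarith)
  have hr0 : 0 < r := Real.sqrt_pos.mpr (by linarith)
  have hrlt : r < 1/2 := by nlinarith
  have hS : ∀ v : ℝ × ℝ, v ∈ S ↔ (v.1 ^ 2 - 1/2) ^ 2 + (v.2 ^ 2 - 1/2) ^ 2 = r ^ 2 := by
    intro v
    rw [hSdef, mem_setOf_eq]
    constructor
    · intro h; linear_combination h - hr2
    · intro h; linear_combination h + hr2
  have hne1 : ∀ v ∈ S, v.1 ≠ 0 := by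
    intro v hv h0
    have := (hS v).mp hv
    rw [h0] at this
    nlinarith [sq_nonneg (v.2 ^ 2 - 1/2)]
  have hne2 : ∀ v ∈ S, v.2 ≠ 0 := by
    intro v hv h0
    have := (hS v).mp hv
    rw [h0] at this
    nlinarith [sq_nonneg (v.1 ^ 2 - 1/2)]
  have hsg := qsg_cases
  have hsq : ∀ i, ((qsg i).1) ^ 2 = 1 ∧ ((qsg i).2) ^ 2 = 1 := by
    intro i
    obtain ⟨h1 | h1, h2 | h2⟩ := hsg i <;> rw [h1, h2] <;> norm_num
  have hsgn : ∀ a b x : ℝ, (a = 1 ∨ a = -1) → (b = 1 ∨ b = -1) →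
      0 < a * x → 0 < b * x → a = b := by
    rintro a b x (rfl | rfl) (rfl | rfl) h1 h2 <;> first | rfl | linarith
  set U : Fin 4 → Set S := fun i =>
    {x : S | 0 < (qsg i).1 * (x : ℝ × ℝ).1 ∧ 0 < (qsg i).2 * (x : ℝ × ℝ).2} with hUdef
  set g : Fin 4 → ℝ → ℝ × ℝ := fun i θ =>
    ((qsg i).1 * Real.sqrt (1/2 + r * Real.cos θ), (qsg i).2 * Real.sqrt (1/2 + r * Real.sin θ))
    with hgdef
  have hpos : ∀ c : ℝ, -1 ≤ c → (0:ℝ) < 1/2 + r * c := by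
    intro c hc
    nlinarith
  have himg : ∀ i, Subtype.val '' U i = Set.range (g i) := by
    intro i
    ext v
    constructor
    · rintro ⟨x, ⟨hx1, hx2⟩, rfl⟩
      have hxS := (hS x).mp x.2
      obtain ⟨θ, hθ1, hθ2⟩ := exists_cos_sin hr0 hxS
      refine ⟨θ, ?_⟩
      have e1 : 1/2 + r * Real.cos θ = (x : ℝ × ℝ).1 ^ 2 := by linarith
      have e2 : 1/2 + r * Real.sin θ = (x : ℝ × ℝ).2 ^ 2 := by linarith
      have a1 : (qsg i).1 * Real.sqrt ((x : ℝ × ℝ).1 ^ 2) = (x : ℝ × ℝ).1 := by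
        rw [Real.sqrt_sq_eq_abs]
        rcases (hsg i).1 with h | h <;> rw [h] at hx1 ⊢
        · rw [one_mul] at hx1 ⊢; exact abs_of_pos hx1
        · have : (x : ℝ × ℝ).1 < 0 := by linarith
          rw [abs_of_neg this]; ring
      have a2 : (qsg i).2 * Real.sqrt ((x : ℝ × ℝ).2 ^ 2) = (x : ℝ × ℝ).2 := by
        rw [Real.sqrt_sq_eq_abs]
        rcases (hsg i).2 with h | h <;> rw [h] at hx2 ⊢
        · rw [one_mul] at hx2 ⊢; exact abs_of_pos hx2
        · have : (x : ℝ × ℝ).2 < 0 := by linarith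
          rw [abs_of_neg this]; ring
      rw [hgdef]
      simp only
      rw [e1, e2, a1, a2]
    · rintro ⟨θ, rfl⟩
      have h1 := hpos (Real.cos θ) (Real.neg_one_le_cos θ)
      have h2 := hpos (Real.sin θ) (Real.neg_one_le_sin θ)
      have s1 : (Real.sqrt (1/2 + r * Real.cos θ)) ^ 2 = 1/2 + r * Real.cos θ :=
        Real.sq_sqrt h1.le
      have s2 : (Real.sqrt (1/2 + r * Real.sin θ)) ^ 2 = 1/2 + r * Real.sin θ :=
        Real.sq_sqrt h2.le
      have hmem : g i θ ∈ S := by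
        rw [hS, hgdef]
        simp only
        rw [mul_pow, mul_pow, (hsq i).1, (hsq i).2, one_mul, one_mul, s1, s2]
        have := Real.sin_sq_add_cos_sq θ
        linear_combination r ^ 2 * this
      refine ⟨⟨g i θ, hmem⟩, ⟨?_, ?_⟩, rfl⟩
      · show 0 < (qsg i).1 * ((qsg i).1 * Real.sqrt (1/2 + r * Real.cos θ))
        have e : (qsg i).1 * ((qsg i).1 * Real.sqrt (1/2 + r * Real.cos θ))
            = Real.sqrt (1/2 + r * Real.cos θ) := by
          rw [← mul_assoc, ← sq, (hsq i).1, one_mul]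
        rw [e]
        exact Real.sqrt_pos.mpr h1
      · show 0 < (qsg i).2 * ((qsg i).2 * Real.sqrt (1/2 + r * Real.sin θ))
        have e : (qsg i).2 * ((qsg i).2 * Real.sqrt (1/2 + r * Real.sin θ))
            = Real.sqrt (1/2 + r * Real.sin θ) := by
          rw [← mul_assoc, ← sq, (hsq i).2, one_mul]
        rw [e]
        exact Real.sqrt_pos.mpr h2
  refine card_components_eq U ?_ ?_ ?_ ?_ ?_
  · intro i
    have : U i = Subtype.val ⁻¹' {v : ℝ × ℝ | 0 < (qsg i).1 * v.1 ∧ 0 < (qsg i).2 * v.2} := rfl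
    rw [this]
    refine IsOpen.preimage continuous_subtype_val ?_
    exact (isOpen_lt continuous_const (continuous_const.mul continuous_fst)).inter
      (isOpen_lt continuous_const (continuous_const.mul continuous_snd))
  · intro i
    rw [← Topology.IsInducing.subtypeVal.isPreconnected_image, himg i]
    refine isPreconnected_range ?_
    rw [hgdef]
    fun_prop
  · intro i
    have : (Subtype.val '' U i).Nonempty := by
      rw [himg i]; exact range_nonempty _
    exact this.of_image
  · intro i j hij
    rw [Set.disjoint_left]
    rintro x ⟨h1, h2⟩ ⟨h3, h4⟩
    exact hij (qsg_inj (Prod.ext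
      (hsgn _ _ _ (hsg i).1 (hsg j).1 h1 h3)
      (hsgn _ _ _ (hsg i).2 (hsg j).2 h2 h4)))
  · intro x
    have h1 := hne1 x x.2
    have h2 := hne2 x x.2
    rcases h1.lt_or_gt with hx1 | hx1 <;> rcases h2.lt_or_gt with hx2 | hx2
    · refine ⟨3, ?_, ?_⟩ <;> norm_num [qsg, Matrix.cons_val_three] <;> linarith
    · refine ⟨2, ?_, ?_⟩ <;> norm_num [qsg, Matrix.cons_val_two] <;> linarith
    · refine ⟨1, ?_, ?_⟩ <;> norm_num [qsg] <;> linarith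
    · refine ⟨0, ?_, ?_⟩ <;> norm_num [qsg] <;> linarith

private def qt : Fin 2 → ℝ := ![-1, 1]

private lemma qt_cases : ∀ i, qt i = -1 ∨ qt i = 1 := by
  intro i; fin_cases i <;> norm_num [qt]

private lemma qt_mul : ∀ i j : Fin 2, i ≠ j → qt i * qt j = -1 := by
  intro i j h
  fin_cases i <;> fin_cases j <;> first | (exact absurd rfl h) | norm_num [qt]

private lemma k_bounds (θ : ℝ) :
    1/2 ≤ Real.cos θ ^ 4 + Real.sin θ ^ 4 ∧ Real.cos θ ^ 4 + Real.sin θ ^ 4 ≤ 1 := by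
  have h := Real.sin_sq_add_cos_sq θ
  constructor <;>
    nlinarith [sq_nonneg (Real.cos θ ^ 2 - Real.sin θ ^ 2), sq_nonneg (Real.cos θ * Real.sin θ)]

private noncomputable def wf (α θ : ℝ) : ℝ :=
  Real.sqrt (1 - 4 * α * (Real.cos θ ^ 4 + Real.sin θ ^ 4))

private noncomputable def qf (α σ θ : ℝ) : ℝ :=
  (1 + σ * wf α θ) / (2 * (Real.cos θ ^ 4 + Real.sin θ ^ 4))

private noncomputable def gf (α σ θ : ℝ) : ℝ × ℝ :=
  (Real.sqrt (qf α σ θ) * Real.cos θ, Real.sqrt (qf α σ θ) * Real.sin θ)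

private lemma gf_cont (α σ : ℝ) : Continuous (gf α σ) := by
  have hq : Continuous (qf α σ) := by
    unfold qf wf
    refine Continuous.div (by fun_prop) (by fun_prop) (fun θ => ?_)
    have := (k_bounds θ).1
    intro h0
    linarith
  unfold gf
  exact ((Real.continuous_sqrt.comp hq).mul Real.continuous_cos).prodMk
    ((Real.continuous_sqrt.comp hq).mul Real.continuous_sin)

-- algebra helpers
private lemma root_aux {α k σ w q : ℝ} (hk : k ≠ 0) (hσ : σ ^ 2 = 1)
    (hw2 : w ^ 2 = 1 - 4 * α * k) (hq : q = (1 + σ * w) / (2 * k)) :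
    k * q ^ 2 - q + α = 0 := by
  have hk2 : (2 : ℝ) * k ≠ 0 := by intro h; apply hk; linarith
  have hq' : 2 * k * q = 1 + σ * w := by
    rw [hq]; field_simp
  have h4 : 4 * k * (k * q ^ 2 - q + α) = 0 := by
    linear_combination (2 * k * q + 1 + σ * w) * hq' - 2 * hq' + w ^ 2 * hσ + hw2
  rcases mul_eq_zero.mp h4 with h | h
  · exact absurd (by linarith : k = 0) hk
  · exact h

private lemma mem_eq_aux {α c s t : ℝ} (hpyth : s ^ 2 + c ^ 2 = 1)
    (hroot : (c ^ 4 + s ^ 4) * (t ^ 2) ^ 2 - t ^ 2 + α = 0) :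
    (t * c) ^ 4 + (t * s) ^ 4 - (t * c) ^ 2 - (t * s) ^ 2 + α = 0 := by
  linear_combination hroot - t ^ 2 * hpyth

private lemma qminus_lt {α k w : ℝ} (hk1 : 1/2 ≤ k) (hk2 : k ≤ 1) (hα1 : 0 < α)
    (hα2 : α < 1/4) (hw2 : w ^ 2 = 1 - 4 * α * k) (hw0 : 0 ≤ w) : 1 - w < k := by
  nlinarith

private lemma wpos {α k w : ℝ} (hk1 : 1/2 ≤ k) (hk2 : k ≤ 1) (hα1 : 0 < α)
    (hα2 : α < 1/4) (hw2 : w ^ 2 = 1 - 4 * α * k) (hw0 : 0 ≤ w) : 0 < w := by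
  nlinarith

private lemma wle1 {α k w : ℝ} (hk1 : 1/2 ≤ k) (hα1 : 0 < α)
    (hw2 : w ^ 2 = 1 - 4 * α * k) (hw0 : 0 ≤ w) : w ≤ 1 := by
  nlinarith

private lemma root_eq_aux {α k w m : ℝ} (hk1 : 1/2 ≤ k)
    (hw2 : w ^ 2 = 1 - 4 * α * k) (hw0 : 0 ≤ w)
    (hroot : k * m ^ 2 - m + α = 0) (hm : 2 * k * m < 1) : 2 * k * m = 1 - w := by
  have h5 : (1 - 2 * k * m - w) * (1 - 2 * k * m + w) = 0 := by
    linear_combination 4 * k * hroot - hw2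
  rcases mul_eq_zero.mp h5 with h | h
  · linarith
  · linarith

private lemma root_eq_aux' {α k w m : ℝ} (hk1 : 1/2 ≤ k) (hk2 : k ≤ 1) (hα1 : 0 < α)
    (hα2 : α < 1/4) (hw2 : w ^ 2 = 1 - 4 * α * k) (hw0 : 0 ≤ w)
    (hroot : k * m ^ 2 - m + α = 0) (hm : 1/2 < m) : 2 * k * m = 1 + w := by
  have h5 : (1 - 2 * k * m - w) * (1 - 2 * k * m + w) = 0 := by
    linear_combination 4 * k * hroot - hw2
  have hq := qminus_lt hk1 hk2 hα1 hα2 hw2 hw0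
  rcases mul_eq_zero.mp h5 with h | h
  · nlinarith
  · linarith

private lemma part2 (α : ℝ) (hα : α ∈ Ioo (0 : ℝ) (1/4 : ℝ)) :
    Nat.card (ConnectedComponents
      ↥{v : ℝ × ℝ | v.1 ^ 4 + v.2 ^ 4 - v.1 ^ 2 - v.2 ^ 2 + α = 0}) = 2 := by
  obtain ⟨hα1, hα2⟩ := hα
  set S : Set (ℝ × ℝ) := {v : ℝ × ℝ | v.1 ^ 4 + v.2 ^ 4 - v.1 ^ 2 - v.2 ^ 2 + α = 0} with hSdef
  have hw2 : ∀ θ : ℝ, (wf α θ) ^ 2 = 1 - 4 * α * (Real.cos θ ^ 4 + Real.sin θ ^ 4) := by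
    intro θ
    have h := k_bounds θ
    exact Real.sq_sqrt (by nlinarith [h.1, h.2])
  have hw0 : ∀ θ : ℝ, 0 ≤ wf α θ := fun θ => Real.sqrt_nonneg _
  have hw1 : ∀ θ : ℝ, wf α θ ≤ 1 := fun θ => wle1 (k_bounds θ).1 hα1 (hw2 θ) (hw0 θ)
  have hwpos : ∀ θ : ℝ, 0 < wf α θ :=
    fun θ => wpos (k_bounds θ).1 (k_bounds θ).2 hα1 hα2 (hw2 θ) (hw0 θ)
  have hkpos : ∀ θ : ℝ, (0:ℝ) < 2 * (Real.cos θ ^ 4 + Real.sin θ ^ 4) := by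
    intro θ; linarith [(k_bounds θ).1]
  have hq0 : ∀ σ θ : ℝ, σ = -1 ∨ σ = 1 → 0 ≤ qf α σ θ := by
    rintro σ θ (rfl | rfl) <;> unfold qf <;>
      refine div_nonneg (by nlinarith [hw1 θ, hw0 θ]) (hkpos θ).le
  have hroot : ∀ σ θ : ℝ, σ = -1 ∨ σ = 1 →
      (Real.cos θ ^ 4 + Real.sin θ ^ 4) * (qf α σ θ) ^ 2 - qf α σ θ + α = 0 := by
    intro σ θ hσ
    refine root_aux (by linarith [(k_bounds θ).1]) ?_ (hw2 θ) rfl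
    rcases hσ with rfl | rfl <;> norm_num
  have hmem : ∀ σ θ : ℝ, σ = -1 ∨ σ = 1 → gf α σ θ ∈ S := by
    intro σ θ hσ
    have ht2 : (Real.sqrt (qf α σ θ)) ^ 2 = qf α σ θ := Real.sq_sqrt (hq0 σ θ hσ)
    have h := hroot σ θ hσ
    rw [← ht2] at h
    exact mem_eq_aux (Real.sin_sq_add_cos_sq θ) h
  have hval : ∀ σ θ : ℝ, σ = -1 ∨ σ = 1 →
      (gf α σ θ).1 ^ 2 + (gf α σ θ).2 ^ 2 = qf α σ θ := by
    intro σ θ hσ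
    have ht2 : (Real.sqrt (qf α σ θ)) ^ 2 = qf α σ θ := Real.sq_sqrt (hq0 σ θ hσ)
    unfold gf
    have hpyth := Real.sin_sq_add_cos_sq θ
    linear_combination (Real.sqrt (qf α σ θ)) ^ 2 * hpyth + ht2
  have hq_lt : ∀ θ : ℝ, qf α (-1) θ < 1/2 := by
    intro θ
    have h := qminus_lt (k_bounds θ).1 (k_bounds θ).2 hα1 hα2 (hw2 θ) (hw0 θ)
    unfold qf
    rw [div_lt_iff₀ (hkpos θ)]
    nlinarith
  have hq_gt : ∀ θ : ℝ, 1/2 < qf α 1 θ := by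
    intro θ
    have h := hwpos θ
    have h2 := (k_bounds θ).2
    unfold qf
    rw [lt_div_iff₀ (hkpos θ)]
    nlinarith
  -- the two regions
  set U : Fin 2 → Set S := fun i =>
    {x : S | 0 < (qt i) * ((x : ℝ × ℝ).1 ^ 2 + (x : ℝ × ℝ).2 ^ 2 - 1/2)} with hUdef
  have himg : ∀ σ : ℝ, σ = -1 ∨ σ = 1 →
      Subtype.val '' {x : S | 0 < σ * ((x : ℝ × ℝ).1 ^ 2 + (x : ℝ × ℝ).2 ^ 2 - 1/2)}
        = Set.range (gf α σ) := by
    intro σ hσ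
    ext v
    constructor
    · rintro ⟨x, hx, rfl⟩
      simp only [mem_setOf_eq] at hx
      have hmemS : (x : ℝ × ℝ).1 ^ 4 + (x : ℝ × ℝ).2 ^ 4
          - (x : ℝ × ℝ).1 ^ 2 - (x : ℝ × ℝ).2 ^ 2 + α = 0 := x.2
      have hmpos : 0 < (x : ℝ × ℝ).1 ^ 2 + (x : ℝ × ℝ).2 ^ 2 := by
        rcases lt_or_ge 0 ((x : ℝ × ℝ).1 ^ 2 + (x : ℝ × ℝ).2 ^ 2) with h | h
        · exact h
        · exfalso; nlinarith [sq_nonneg ((x:ℝ×ℝ).1 ^ 2), sq_nonneg ((x:ℝ×ℝ).2 ^ 2),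
            sq_nonneg (x:ℝ×ℝ).1, sq_nonneg (x:ℝ×ℝ).2]
      set ρ : ℝ := Real.sqrt ((x : ℝ × ℝ).1 ^ 2 + (x : ℝ × ℝ).2 ^ 2) with hρdef
      have hρ2 : ρ ^ 2 = (x : ℝ × ℝ).1 ^ 2 + (x : ℝ × ℝ).2 ^ 2 := Real.sq_sqrt hmpos.le
      have hρ0 : 0 < ρ := Real.sqrt_pos.mpr hmpos
      obtain ⟨θ, hθ1, hθ2⟩ := exists_cos_sin hρ0 hρ2.symm
      have hpyth := Real.sin_sq_add_cos_sq θ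
      rw [hθ1, hθ2] at hmemS
      have hrootρ : (Real.cos θ ^ 4 + Real.sin θ ^ 4) * (ρ ^ 2) ^ 2 - ρ ^ 2 + α = 0 := by
        linear_combination hmemS + ρ ^ 2 * hpyth
      have hm2 : ρ ^ 2 = (x : ℝ × ℝ).1 ^ 2 + (x : ℝ × ℝ).2 ^ 2 := hρ2
      refine ⟨θ, ?_⟩
      have hqeq : qf α σ θ = ρ ^ 2 := by
        rcases hσ with rfl | rfl
        · have hmlt : (x : ℝ × ℝ).1 ^ 2 + (x : ℝ × ℝ).2 ^ 2 < 1/2 := by nlinarith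
          have h2km : 2 * (Real.cos θ ^ 4 + Real.sin θ ^ 4) * ρ ^ 2 < 1 := by
            nlinarith [(k_bounds θ).2, sq_nonneg ρ]
          have := root_eq_aux (k_bounds θ).1 (hw2 θ) (hw0 θ) hrootρ h2km
          unfold qf
          rw [div_eq_iff (hkpos θ).ne']
          linarith
        · have hmgt : 1/2 < (x : ℝ × ℝ).1 ^ 2 + (x : ℝ × ℝ).2 ^ 2 := by nlinarith
          have := root_eq_aux' (k_bounds θ).1 (k_bounds θ).2 hα1 hα2 (hw2 θ) (hw0 θ)
            hrootρ (by linarith [hρ2])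
          unfold qf
          rw [div_eq_iff (hkpos θ).ne']
          linarith
      show gf α σ θ = (x : ℝ × ℝ)
      unfold gf
      rw [hqeq, Real.sqrt_sq hρ0.le]
      exact Prod.ext hθ1.symm hθ2.symm
    · rintro ⟨θ, rfl⟩
      refine ⟨⟨gf α σ θ, hmem σ θ hσ⟩, ?_, rfl⟩
      show 0 < σ * ((gf α σ θ).1 ^ 2 + (gf α σ θ).2 ^ 2 - 1/2)
      rw [hval σ θ hσ]
      rcases hσ with rfl | rfl
      · have := hq_lt θ; nlinarith
      · have := hq_gt θ; nlinarith
  refine card_components_eq U ?_ ?_ ?_ ?_ ?_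
  · intro i
    have : U i = Subtype.val ⁻¹' {v : ℝ × ℝ | 0 < (qt i) * (v.1 ^ 2 + v.2 ^ 2 - 1/2)} := rfl
    rw [this]
    refine IsOpen.preimage continuous_subtype_val ?_
    exact isOpen_lt continuous_const (by fun_prop)
  · intro i
    rw [← Topology.IsInducing.subtypeVal.isPreconnected_image]
    have : Subtype.val '' U i = Set.range (gf α (qt i)) := himg (qt i) (qt_cases i)
    rw [this]
    exact isPreconnected_range (gf_cont α (qt i))
  · intro i
    have : (Subtype.val '' U i).Nonempty := by
      rw [himg (qt i) (qt_cases i)]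
      exact range_nonempty _
    exact this.of_image
  · intro i j hij
    rw [Set.disjoint_left]
    rintro x h1 h2
    simp only [hUdef, mem_setOf_eq] at h1 h2
    have h3 := mul_pos h1 h2
    have h4 := qt_mul i j hij
    nlinarith [sq_nonneg ((x : ℝ × ℝ).1 ^ 2 + (x : ℝ × ℝ).2 ^ 2 - 1/2)]
  · intro x
    have hmemS : (x : ℝ × ℝ).1 ^ 4 + (x : ℝ × ℝ).2 ^ 4
        - (x : ℝ × ℝ).1 ^ 2 - (x : ℝ × ℝ).2 ^ 2 + α = 0 := x.2
    have hne : (x : ℝ × ℝ).1 ^ 2 + (x : ℝ × ℝ).2 ^ 2 ≠ 1/2 := by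
      intro h
      nlinarith [sq_nonneg ((x : ℝ × ℝ).1 * (x : ℝ × ℝ).2)]
    rcases hne.lt_or_gt with h | h
    · refine ⟨0, ?_⟩
      show 0 < qt 0 * ((x : ℝ × ℝ).1 ^ 2 + (x : ℝ × ℝ).2 ^ 2 - 1/2)
      norm_num [qt]; linarith
    · refine ⟨1, ?_⟩
      show 0 < qt 1 * ((x : ℝ × ℝ).1 ^ 2 + (x : ℝ × ℝ).2 ^ 2 - 1/2)
      norm_num [qt]; linarith


noncomputable section

/-- For `α ∈ (1/4, 1/2)` the real plane curve `x⁴ + y⁴ − x² − y² + α = 0` has exactly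
four connected components, and for `α ∈ (0, 1/4)` it has exactly two. -/
theorem components_of_quartic_curves :
    (∀ α : ℝ, α ∈ Ioo (1/4 : ℝ) (1/2 : ℝ) →
      Nat.card (ConnectedComponents
        ↥{v : ℝ × ℝ | v.1 ^ 4 + v.2 ^ 4 - v.1 ^ 2 - v.2 ^ 2 + α = 0}) = 4) ∧
    (∀ α : ℝ, α ∈ Ioo (0 : ℝ) (1/4 : ℝ) →
      Nat.card (ConnectedComponents
        ↥{v : ℝ × ℝ | v.1 ^ 4 + v.2 ^ 4 - v.1 ^ 2 - v.2 ^ 2 + α = 0}) = 2) := by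
  exact ⟨part1, part2⟩

end
end
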